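/- Edge-midpoint gradient formula on a triangle: let K ⊂ ℝ² be a nondegenerate triangle (the convex hull of three affinely independent points), with area |K|, edges σ₁, σ₂, σ₃ of lengths |σ₁|, |σ₂|, |σ₃|, edge midpoints x_{σ₁}, x_{σ₂}, x_{σ₃}, and outward unit normals n₁, n₂, n₃. Then for every affine function q: ℝ² → ℝ, whose gradient ∇q is a constant vector, one has |K| ∇q = ∑_{i=1}^3 |σ_i| q(x_{σ_i}) n_i. -/

import Mathlib

open scoped RealInnerProductSpace
open MeasureTheory

noncomputable section

/-- The Euclidean plane. -/
abbrev E2 : Type := EuclideanSpace ℝ (Fin 2)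

/-- A nondegenerate triangle of the plane, given by its three affinely
independent vertices.  Its edge `σ_i` joins the vertices `vtx (i+1)` and `vtx (i+2)`. -/
structure Tri : Type where
  vtx : Fin 3 → E2
  indep : AffineIndependent ℝ vtx

/-- The triangle as a subset of the plane: the convex hull of its vertices. -/
def Tri.carrier (t : Tri) : Set E2 := convexHull ℝ (Set.range t.vtx)

/-- The area `|K|` of the triangle. -/
def Tri.area (t : Tri) : ℝ := (volume t.carrier).toReal

open Set Pointwise

def tD (t : Tri) : ℝ :=
  (t.vtx 1 0 - t.vtx 0 0) * (t.vtx 2 1 - t.vtx 0 1) -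
  (t.vtx 1 1 - t.vtx 0 1) * (t.vtx 2 0 - t.vtx 0 0)

lemma tri_li (t : Tri) :
    LinearIndependent ℝ ![t.vtx 1 - t.vtx 0, t.vtx 2 - t.vtx 0] := by
  have h := (affineIndependent_iff_linearIndependent_vsub ℝ t.vtx 0).mp t.indep
  have hinj : Function.Injective (fun j : Fin 2 =>
      (⟨j.succ, by fin_cases j <;> decide⟩ : {x : Fin 3 // x ≠ 0})) := by
    intro a b hab
    fin_cases a <;> fin_cases b <;> simp_all
  have h2 := h.comp _ hinj
  convert h2 using 1
  funext j
  fin_cases j <;> simp [vsub_eq_sub]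
  rfl
lemma tD_ne_zero (t : Tri) : tD t ≠ 0 := by
  intro hD
  obtain ⟨hw, hau⟩ := linearIndependent_fin2.mp (tri_li t)
  set u : E2 := t.vtx 1 - t.vtx 0 with hu
  set w : E2 := t.vtx 2 - t.vtx 0 with hw'
  have hD0 : u 0 * w 1 - u 1 * w 0 = 0 := by
    rw [tD] at hD; simp only [hu, hw', PiLp.sub_apply]; linarith [hD]
  have hwne : w 0 ^ 2 + w 1 ^ 2 ≠ 0 := by
    intro h
    apply hw
    have h0 : w 0 = 0 := by nlinarith [sq_nonneg (w 0), sq_nonneg (w 1)]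
    have h1 : w 1 = 0 := by nlinarith [sq_nonneg (w 0), sq_nonneg (w 1)]
    ext j; fin_cases j <;> simpa [h0, h1]
  apply hau ((u 0 * w 0 + u 1 * w 1) / (w 0 ^ 2 + w 1 ^ 2))
  ext j
  fin_cases j
  · simp only [PiLp.smul_apply, smul_eq_mul, Matrix.cons_val_one, Matrix.cons_val_zero, Fin.zero_eta, Fin.mk_one]
    field_simp
    linear_combination (-(w 1)) * hD0
  · simp only [PiLp.smul_apply, smul_eq_mul, Matrix.cons_val_one, Matrix.cons_val_zero, Fin.zero_eta, Fin.mk_one]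
    field_simp
    linear_combination (w 0) * hD0

def E₀ : E2 := EuclideanSpace.single 0 1
def E₁ : E2 := EuclideanSpace.single 1 1
@[simp] lemma E0_apply0 : E₀ 0 = 1 := by simp [E₀, EuclideanSpace.single_apply]
@[simp] lemma E0_apply1 : E₀ 1 = 0 := by simp [E₀, EuclideanSpace.single_apply]
@[simp] lemma E1_apply0 : E₁ 0 = 0 := by simp [E₁, EuclideanSpace.single_apply]
@[simp] lemma E1_apply1 : E₁ 1 = 1 := by simp [E₁, EuclideanSpace.single_apply]

def tM (t : Tri) : Matrix (Fin 2) (Fin 2) ℝ :=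
  Matrix.of ![![(t.vtx 1 - t.vtx 0) 0, (t.vtx 2 - t.vtx 0) 0],
              ![(t.vtx 1 - t.vtx 0) 1, (t.vtx 2 - t.vtx 0) 1]]

lemma tM_apply (t : Tri) (x : E2) (j : Fin 2) :
    (Matrix.toEuclideanLin (tM t) x) j = tM t j 0 * x 0 + tM t j 1 * x 1 := by
  simp [Matrix.toEuclideanLin_apply, Matrix.mulVec, dotProduct, Fin.sum_univ_two]
  fin_cases j <;> rfl

lemma tM_det (t : Tri) : (tM t).det = tD t := by
  rw [tM, Matrix.det_fin_two]
  simp [tD]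
  ring

lemma carrier_eq (t : Tri) :
    t.carrier = (fun x => t.vtx 0 + x) ''
      (Matrix.toEuclideanLin (tM t) '' (convexHull ℝ ({0, E₀, E₁} : Set E2))) := by
  have hrange : Set.range t.vtx = {t.vtx 0, t.vtx 1, t.vtx 2} := by
    ext x
    constructor
    · rintro ⟨i, rfl⟩; fin_cases i <;> simp
    · rintro (rfl | rfl | rfl) <;> exact ⟨_, rfl⟩
  have hL0 : Matrix.toEuclideanLin (tM t) 0 = 0 := map_zero _
  have hLE0 : Matrix.toEuclideanLin (tM t) E₀ = t.vtx 1 - t.vtx 0 := by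
    ext j; fin_cases j <;> simp only [tM_apply] <;> simp [tM]
  have hLE1 : Matrix.toEuclideanLin (tM t) E₁ = t.vtx 2 - t.vtx 0 := by
    ext j; fin_cases j <;> simp only [tM_apply] <;> simp [tM]
  rw [Tri.carrier, hrange, (Matrix.toEuclideanLin (tM t)).image_convexHull]
  rw [Set.image_insert_eq, Set.image_insert_eq, Set.image_singleton, hL0, hLE0, hLE1]
  have himg : (fun x => t.vtx 0 + x) '' convexHull ℝ {0, t.vtx 1 - t.vtx 0, t.vtx 2 - t.vtx 0}
      = t.vtx 0 +ᵥ convexHull ℝ {0, t.vtx 1 - t.vtx 0, t.vtx 2 - t.vtx 0} := rfl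
  rw [himg, ← convexHull_vadd]
  congr 1
  have : t.vtx 0 +ᵥ ({0, t.vtx 1 - t.vtx 0, t.vtx 2 - t.vtx 0} : Set E2)
      = {t.vtx 0, t.vtx 1, t.vtx 2} := by
    rw [← Set.image_vadd, Set.image_insert_eq, Set.image_insert_eq, Set.image_singleton]
    simp only [vadd_eq_add, add_zero]
    rw [show t.vtx 0 + (t.vtx 1 - t.vtx 0) = t.vtx 1 by abel,
      show t.vtx 0 + (t.vtx 2 - t.vtx 0) = t.vtx 2 by abel]
  rw [this]

lemma inner2 (x y : E2) : ⟪x, y⟫ = x 0 * y 0 + x 1 * y 1 := by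
  simp [PiLp.inner_apply, RCLike.inner_apply, Fin.sum_univ_two, mul_comm]

lemma line_null (a : E2) (ha : a ≠ 0) (b : ℝ) : volume {x : E2 | ⟪a, x⟫ = b} = 0 := by
  obtain ⟨x₀, hx₀⟩ : ∃ x₀ : E2, ⟪a, x₀⟫ = b := by
    refine ⟨(b / ‖a‖ ^ 2) • a, ?_⟩
    rw [real_inner_smul_right, real_inner_self_eq_norm_sq]
    field_simp [norm_ne_zero_iff.mpr ha]
  have hker : {x : E2 | ⟪a, x⟫ = b} = (fun y => x₀ + y) '' (LinearMap.ker ((innerSL ℝ a : E2 →L[ℝ] ℝ) : E2 →ₗ[ℝ] ℝ) : Set E2) := by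
    ext x
    simp only [mem_setOf_eq, image_add_left, mem_preimage, SetLike.mem_coe, LinearMap.mem_ker]
    constructor
    · intro h
      simp only [ContinuousLinearMap.coe_coe, innerSL_apply_apply]
      rw [inner_add_right, inner_neg_right, hx₀, h]; ring
    · intro h
      simp only [ContinuousLinearMap.coe_coe, innerSL_apply_apply] at h
      rw [inner_add_right, inner_neg_right, hx₀] at h; linarith
  rw [hker, Set.image_add_left, measure_preimage_add]
  refine Measure.addHaar_submodule _ _ ?_
  intro htop
  have : (a : E2) ∈ LinearMap.ker ((innerSL ℝ a : E2 →L[ℝ] ℝ) : E2 →ₗ[ℝ] ℝ) := htop ▸ Submodule.mem_top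
  rw [LinearMap.mem_ker] at this
  simp only [ContinuousLinearMap.coe_coe, innerSL_apply_apply] at this
  exact ha (inner_self_eq_zero.mp this)

lemma hull_eq : convexHull ℝ ({0, E₀, E₁} : Set E2)
    = {x : E2 | 0 ≤ x 0 ∧ 0 ≤ x 1 ∧ x 0 + x 1 ≤ 1} := by
  apply le_antisymm
  · apply convexHull_min
    · rintro x (rfl | rfl | rfl) <;> norm_num
    · rintro x ⟨hx0, hx1, hx2⟩ y ⟨hy0, hy1, hy2⟩ a b ha hb hab
      refine ⟨?_, ?_, ?_⟩ <;> simp only [PiLp.add_apply, PiLp.smul_apply, smul_eq_mul] <;> nlinarith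
  · rintro x ⟨h0, h1, h2⟩
    have := Finset.centerMass_mem_convexHull (Finset.univ : Finset (Fin 3))
      (s := ({0, E₀, E₁} : Set E2)) (w := ![1 - x 0 - x 1, x 0, x 1]) (z := ![0, E₀, E₁])
      (by intro i _; fin_cases i <;> simp <;> linarith)
      (by simp [Fin.sum_univ_three]; linarith)
      (by intro i _; fin_cases i <;> simp)
    convert this using 2
    rw [Finset.centerMass]
    have hsum : ∑ i : Fin 3, (![1 - x 0 - x 1, x 0, x 1]) i = 1 := by
      simp [Fin.sum_univ_three]; ring
    rw [hsum, inv_one, one_smul]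
    ext j
    fin_cases j <;> simp [Fin.sum_univ_three] <;> ring

lemma open_tri_vol :
    volume {p : ℝ × ℝ | 0 < p.1 ∧ 0 < p.2 ∧ p.1 + p.2 < 1} = ENNReal.ofReal (1/2) := by
  have hset : {p : ℝ × ℝ | 0 < p.1 ∧ 0 < p.2 ∧ p.1 + p.2 < 1}
      = regionBetween (fun _ => (0:ℝ)) (fun x => 1 - x) (Ioo 0 1) := by
    ext p
    simp only [regionBetween, mem_setOf_eq, mem_Ioo]
    constructor
    · rintro ⟨h1, h2, h3⟩; exact ⟨⟨h1, by linarith⟩, h2, by linarith⟩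
    · rintro ⟨⟨h1, h2⟩, h3, h4⟩; exact ⟨h1, h3, by linarith⟩
  rw [hset, MeasureTheory.Measure.volume_eq_prod ℝ ℝ]
  rw [volume_regionBetween_eq_integral (f := fun _ => (0:ℝ)) (g := fun x => 1 - x) (s := Ioo 0 1)
    (integrableOn_const measure_Ioo_lt_top.ne)
    (((by continuity : Continuous fun x : ℝ => 1 - x).integrableOn_Icc (a := 0) (b := 1)).mono_set Ioo_subset_Icc_self)
    measurableSet_Ioo (fun x hx => by simp at hx ⊢; linarith [hx.2])]
  simp only [Pi.sub_apply, sub_zero]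
  rw [← integral_Ioc_eq_integral_Ioo, ← intervalIntegral.integral_of_le zero_le_one]
  rw [intervalIntegral.integral_sub intervalIntegrable_const intervalIntegral.intervalIntegrable_id]
  simp [integral_id]
  norm_num
  rw [ENNReal.ofReal_div_of_pos two_pos]; simp

lemma std_tri_vol :
    volume {x : E2 | 0 ≤ x 0 ∧ 0 ≤ x 1 ∧ x 0 + x 1 ≤ 1} = ENNReal.ofReal (1/2) := by
  set So : Set E2 := {x : E2 | 0 < x 0 ∧ 0 < x 1 ∧ x 0 + x 1 < 1} with hSo
  have hvolSo : volume So = ENNReal.ofReal (1/2) := by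
    have hψ : MeasurePreserving
        (((MeasurableEquiv.toLp 2 (Fin 2 → ℝ)).symm).trans (MeasurableEquiv.finTwoArrow)) volume volume :=
      (volume_preserving_finTwoArrow ℝ).comp (EuclideanSpace.volume_preserving_symm_measurableEquiv_toLp (Fin 2))
    have hpre : (((MeasurableEquiv.toLp 2 (Fin 2 → ℝ)).symm).trans (MeasurableEquiv.finTwoArrow)) ⁻¹'
        {p : ℝ × ℝ | 0 < p.1 ∧ 0 < p.2 ∧ p.1 + p.2 < 1} = So := rfl
    rw [← open_tri_vol, ← hpre]
    exact hψ.measure_preimage (by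
      have : MeasurableSet {p : ℝ × ℝ | 0 < p.1 ∧ 0 < p.2 ∧ p.1 + p.2 < 1} := by
        apply MeasurableSet.inter
        · exact measurableSet_lt measurable_const measurable_fst
        · exact MeasurableSet.inter (measurableSet_lt measurable_const measurable_snd)
            (measurableSet_lt (measurable_fst.add measurable_snd) measurable_const)
      exact this.nullMeasurableSet)
  apply le_antisymm
  · have hsub : {x : E2 | 0 ≤ x 0 ∧ 0 ≤ x 1 ∧ x 0 + x 1 ≤ 1} ⊆
        So ∪ ({x : E2 | ⟪E₀, x⟫ = 0} ∪ {x : E2 | ⟪E₁, x⟫ = 0} ∪ {x : E2 | ⟪E₀ + E₁, x⟫ = 1}) := by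
      rintro x ⟨h0, h1, h2⟩
      rcases eq_or_lt_of_le h0 with h | h
      · exact Or.inr (Or.inl (Or.inl (by simp [inner2, ← h])))
      rcases eq_or_lt_of_le h1 with h' | h'
      · exact Or.inr (Or.inl (Or.inr (by simp [inner2, ← h'])))
      rcases eq_or_lt_of_le h2 with h'' | h''
      · refine Or.inr (Or.inr ?_)
        simp only [mem_setOf_eq, inner2, PiLp.add_apply]
        simp; linarith
      · exact Or.inl ⟨h, h', h''⟩
    have hE0 : (E₀ : E2) ≠ 0 := by
      intro h; have := congrFun (congrArg (fun z : E2 => (z : Fin 2 → ℝ)) h) 0; simp at this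
    have hE1 : (E₁ : E2) ≠ 0 := by
      intro h; have := congrFun (congrArg (fun z : E2 => (z : Fin 2 → ℝ)) h) 1; simp at this
    have hE01 : (E₀ + E₁ : E2) ≠ 0 := by
      intro h; have := congrFun (congrArg (fun z : E2 => (z : Fin 2 → ℝ)) h) 0; simp at this
    calc volume {x : E2 | 0 ≤ x 0 ∧ 0 ≤ x 1 ∧ x 0 + x 1 ≤ 1}
        ≤ volume (So ∪ ({x : E2 | ⟪E₀, x⟫ = 0} ∪ {x : E2 | ⟪E₁, x⟫ = 0} ∪ {x : E2 | ⟪E₀ + E₁, x⟫ = 1})) :=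
          measure_mono hsub
      _ ≤ volume So + volume ({x : E2 | ⟪E₀, x⟫ = 0} ∪ {x : E2 | ⟪E₁, x⟫ = 0} ∪ {x : E2 | ⟪E₀ + E₁, x⟫ = 1}) :=
          measure_union_le _ _
      _ = volume So := by
          have hnull : volume ({x : E2 | ⟪E₀, x⟫ = 0} ∪ {x : E2 | ⟪E₁, x⟫ = 0}
              ∪ {x : E2 | ⟪E₀ + E₁, x⟫ = 1}) = 0 :=
            measure_union_null
              (measure_union_null (line_null E₀ hE0 0) (line_null E₁ hE1 0))
              (line_null (E₀ + E₁) hE01 1)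
          rw [hnull, add_zero]
      _ = ENNReal.ofReal (1/2) := hvolSo
  · rw [← hvolSo]
    apply measure_mono
    rintro x ⟨h0, h1, h2⟩
    exact ⟨le_of_lt h0, le_of_lt h1, le_of_lt h2⟩

lemma area_eq (t : Tri) : t.area = |tD t| / 2 := by
  rw [Tri.area, carrier_eq, Set.image_add_left, measure_preimage_add,
    Measure.addHaar_image_linearMap]
  have hdet : LinearMap.det (Matrix.toEuclideanLin (tM t)) = tD t := by
    rw [Matrix.toEuclideanLin_eq_toLin, LinearMap.det_toLin, tM_det]
  rw [hdet, hull_eq, std_tri_vol, ← ENNReal.ofReal_mul (abs_nonneg _)]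
  rw [ENNReal.toReal_ofReal (by positivity)]
  ring

lemma norm2 (x : E2) : ‖x‖ ^ 2 = x 0 ^ 2 + x 1 ^ 2 := by
  rw [← real_inner_self_eq_norm_sq, inner2]; ring

def Jv (e : E2) : E2 := (WithLp.equiv 2 (Fin 2 → ℝ)).symm ![-(e 1), e 0]

@[simp] lemma Jv_apply0 (e : E2) : Jv e 0 = -(e 1) := rfl
@[simp] lemma Jv_apply1 (e : E2) : Jv e 1 = e 0 := rfl

set_option maxHeartbeats 2000000 in
lemma normal_scaled (n e p : E2) (D : ℝ) (hD : D ≠ 0)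
    (hn : ‖n‖ = 1) (ho : ⟪n, e⟫ = 0) (hsgn : 0 < ⟪n, p⟫)
    (hDe : e 0 * p 1 - e 1 * p 0 = D) :
    ‖e‖ • n = (D / |D|) • Jv e := by
  have hns : n 0 ^ 2 + n 1 ^ 2 = 1 := by
    have := norm2 n; rw [hn] at this; linarith
  rw [inner2] at ho hsgn
  have he : e 0 ^ 2 + e 1 ^ 2 ≠ 0 := by
    intro h
    have h0 : e 0 = 0 := by nlinarith [sq_nonneg (e 0), sq_nonneg (e 1)]
    have h1 : e 1 = 0 := by nlinarith [sq_nonneg (e 0), sq_nonneg (e 1)]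
    exact hD (by rw [← hDe, h0, h1]; ring)
  obtain ⟨t, ha, hb⟩ : ∃ t : ℝ, n 0 = -t * e 1 ∧ n 1 = t * e 0 := by
    refine ⟨(-(n 0) * e 1 + n 1 * e 0) / (e 0 ^ 2 + e 1 ^ 2), ?_, ?_⟩
    · field_simp; linear_combination e 0 * ho
    · field_simp; linear_combination e 1 * ho
  have hnorm : t ^ 2 * (e 0 ^ 2 + e 1 ^ 2) = 1 := by
    rw [ha, hb] at hns; nlinarith [hns]
  have hepos : (0:ℝ) < e 0 ^ 2 + e 1 ^ 2 :=
    lt_of_le_of_ne (by positivity) (Ne.symm he)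
  have henorm : ‖e‖ ^ 2 = e 0 ^ 2 + e 1 ^ 2 := norm2 e
  have hsgn' : 0 < t * D := by
    have h : n 0 * p 0 + n 1 * p 1 = t * D := by rw [ha, hb, ← hDe]; ring
    linarith [h ▸ hsgn]
  have hepos' : (0:ℝ) < ‖e‖ := by nlinarith [norm_nonneg e]
  have hs2 : (‖e‖ * t) ^ 2 = 1 := by rw [mul_pow, henorm]; nlinarith [hnorm]
  have hsD : 0 < (‖e‖ * t) * D := by nlinarith [hsgn', hepos']
  have hst : ‖e‖ * t = D / |D| := by
    have hfac : (‖e‖ * t - 1) * (‖e‖ * t + 1) = 0 := by nlinarith [hs2]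
    rcases mul_eq_zero.mp hfac with h | h
    · have hs1 : ‖e‖ * t = 1 := by linarith
      have hDpos : 0 < D := by nlinarith [hsD]
      rw [hs1, abs_of_pos hDpos, div_self hD]
    · have hs1 : ‖e‖ * t = -1 := by linarith
      have hDneg : D < 0 := by nlinarith [hsD]
      rw [hs1, abs_of_neg hDneg]; field_simp
  ext j
  fin_cases j
  · simp [ha, ← hst]; ring
  · simp [hb, ← hst]; ring

lemma mid2 (x y : E2) (j : Fin 2) : (midpoint ℝ x y) j = (x j + y j) / 2 := by
  simp [midpoint_eq_smul_add]; ring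

/-- **Edge-midpoint gradient formula on a triangle**: for a nondegenerate triangle `K`
with edges `σ_i` (of length `|σ_i|`, midpoint `x_{σ_i}` and outward unit normal `n_i`,
the unit normal of the edge pointing away from the opposite vertex) and every affine
function `q(x) = ⟪ g, x⟫ + c`, one has `|K| ∇q = ∑ i, |σ_i| q(x_{σ_i}) n_i`. -/
theorem edge_midpoint_gradient_formula
    (t : Tri) (nrm : Fin 3 → E2)
    (hunit : ∀ i, ‖nrm i‖ = 1)
    (horth : ∀ i, ⟪nrm i, t.vtx (i + 1) - t.vtx (i + 2)⟫ = 0)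
    (hout : ∀ i, 0 < ⟪nrm i, midpoint ℝ (t.vtx (i + 1)) (t.vtx (i + 2)) - t.vtx i⟫)
    (g : E2) (c : ℝ) (q : E2 → ℝ) (hq : ∀ x, q x = ⟪g, x⟫ + c) :
    t.area • g = ∑ i : Fin 3,
      (dist (t.vtx (i + 1)) (t.vtx (i + 2)) *
        q (midpoint ℝ (t.vtx (i + 1)) (t.vtx (i + 2)))) • nrm i := by
  have hD : tD t ≠ 0 := tD_ne_zero t
  have hterm : ∀ i : Fin 3,
      (dist (t.vtx (i + 1)) (t.vtx (i + 2)) *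
        q (midpoint ℝ (t.vtx (i + 1)) (t.vtx (i + 2)))) • nrm i
      = (tD t / |tD t|) • (q (midpoint ℝ (t.vtx (i + 1)) (t.vtx (i + 2))) •
          Jv (t.vtx (i + 1) - t.vtx (i + 2))) := by
    intro i
    have hDe : (t.vtx (i + 1) - t.vtx (i + 2)) 0 *
          (midpoint ℝ (t.vtx (i + 1)) (t.vtx (i + 2)) - t.vtx i) 1
        - (t.vtx (i + 1) - t.vtx (i + 2)) 1 *
          (midpoint ℝ (t.vtx (i + 1)) (t.vtx (i + 2)) - t.vtx i) 0 = tD t := by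
      have key0 : (t.vtx 1 - t.vtx 2) 0 *
            (midpoint ℝ (t.vtx 1) (t.vtx 2) - t.vtx 0) 1
          - (t.vtx 1 - t.vtx 2) 1 *
            (midpoint ℝ (t.vtx 1) (t.vtx 2) - t.vtx 0) 0 = tD t := by
        simp only [PiLp.sub_apply, mid2, tD]; ring
      have key1 : (t.vtx 2 - t.vtx 0) 0 *
            (midpoint ℝ (t.vtx 2) (t.vtx 0) - t.vtx 1) 1
          - (t.vtx 2 - t.vtx 0) 1 *
            (midpoint ℝ (t.vtx 2) (t.vtx 0) - t.vtx 1) 0 = tD t := by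
        simp only [PiLp.sub_apply, mid2, tD]; ring
      have key2 : (t.vtx 0 - t.vtx 1) 0 *
            (midpoint ℝ (t.vtx 0) (t.vtx 1) - t.vtx 2) 1
          - (t.vtx 0 - t.vtx 1) 1 *
            (midpoint ℝ (t.vtx 0) (t.vtx 1) - t.vtx 2) 0 = tD t := by
        simp only [PiLp.sub_apply, mid2, tD]; ring
      fin_cases i
      · exact key0
      · exact key1
      · exact key2
    have h2 := normal_scaled (nrm i) (t.vtx (i + 1) - t.vtx (i + 2))
      (midpoint ℝ (t.vtx (i + 1)) (t.vtx (i + 2)) - t.vtx i) (tD t) hD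
      (hunit i) (horth i) (hout i) hDe
    rw [dist_eq_norm, mul_comm, mul_smul, h2, smul_comm]
  have hkey : ∑ i : Fin 3, q (midpoint ℝ (t.vtx (i + 1)) (t.vtx (i + 2))) •
      Jv (t.vtx (i + 1) - t.vtx (i + 2)) = (tD t / 2) • g := by
    have f01 : (0 : Fin 3) + 1 = 1 := rfl
    have f02 : (0 : Fin 3) + 2 = 2 := rfl
    have f11 : (1 : Fin 3) + 1 = 2 := rfl
    have f12 : (1 : Fin 3) + 2 = 0 := rfl
    have f21 : (2 : Fin 3) + 1 = 0 := rfl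
    have f22 : (2 : Fin 3) + 2 = 1 := rfl
    ext j
    fin_cases j <;>
    · simp only [Fin.mk_zero, Fin.mk_one, Fin.sum_univ_three, f01, f02, f11, f12, f21, f22,
        PiLp.add_apply, PiLp.smul_apply, smul_eq_mul, Jv_apply0, Jv_apply1, PiLp.sub_apply,
        hq, inner2, mid2, tD]
      ring
  have hsum : ∑ i : Fin 3,
      (dist (t.vtx (i + 1)) (t.vtx (i + 2)) *
        q (midpoint ℝ (t.vtx (i + 1)) (t.vtx (i + 2)))) • nrm i
      = (tD t / |tD t|) • ((tD t / 2) • g) := by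
    rw [Finset.sum_congr rfl (fun i _ => hterm i), ← Finset.smul_sum, hkey]
  rw [hsum, area_eq, smul_smul]
  congr 1
  have habs : |tD t| ≠ 0 := abs_ne_zero.mpr hD
  field_simp
  linear_combination (sq_abs (tD t))

end
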